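/- Let n ≥ 4 and let i be an integer with 2 ≤ i ≤ n−2. Then the number of permutations p of {1,…,n} in which the entry p_i has exactly one child in the minmax tree T^m_p is exactly n!/3. -/

import Mathlib

/-- Binary trees with natural-number labels, used to model minmax trees of
permutations. -/
inductive BTree where
  | nil : BTree
  | node : ℕ → BTree → BTree → BTree
deriving DecidableEq, Repr

namespace BTree

/-- The label of the root (if any). -/
def rootVal : BTree → Option ℕ
  | .nil => none
  | .node v _ _ => some v

/-- Whether the value `x` occurs as a label in the tree. -/
def memB : BTree → ℕ → Bool
  | .nil, _ => false
  | .node v l r, x => (x == v) || memB l x || memB r x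

/-- The number of children of the (unique, for permutations) node labelled `x`. -/
def numChildren : BTree → ℕ → ℕ
  | .nil, _ => 0
  | .node v l r, x =>
      if x = v then (if l = .nil then 0 else 1) + (if r = .nil then 0 else 1)
      else numChildren l x + numChildren r x

/-- `x` is a leaf of the tree: it occurs in the tree and has no children. -/
def IsLeaf (t : BTree) (x : ℕ) : Prop := t.memB x = true ∧ t.numChildren x = 0

instance (t : BTree) (x : ℕ) : Decidable (t.IsLeaf x) := by unfold IsLeaf; infer_instance

/-- `childB t x y = true` iff `x` is a child of `y` in `t`, i.e. `x` is the root of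
the left or the right subtree hanging from `y`. -/
def childB : BTree → ℕ → ℕ → Bool
  | .nil, _, _ => false
  | .node v l r, x, y =>
      ((y == v) && (l.rootVal == some x || r.rootVal == some x))
      || childB l x y || childB r x y

/-- `ancB t x y = true` iff `x` is a (strict) ancestor of `y` in `t`, i.e. `y` lies
in a subtree hanging from `x`. -/
def ancB : BTree → ℕ → ℕ → Bool
  | .nil, _, _ => false
  | .node v l r, x, y =>
      ((x == v) && (memB l y || memB r y)) || ancB l x y || ancB r x y

end BTree

/-- `x` is the leftmost-eligible extreme letter of `l`: the minimum or the maximum. -/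
def isExtreme (l : List ℕ) (x : ℕ) : Bool :=
  (l.min? == some x) || (l.max? == some x)

/-- Fuelled construction of the minmax tree of a list of distinct naturals:
split the list as `u ++ [m] ++ v` where `m` is the leftmost of the minimum and
maximum letters, put `m` at the root and recurse on `u` (left) and `v` (right). -/
def mmAux : ℕ → List ℕ → BTree
  | 0, _ => .nil
  | fuel+1, l =>
    if l.isEmpty then .nil
    else
      let k := l.findIdx (isExtreme l)
      .node (l.getD k 0) (mmAux fuel (l.take k)) (mmAux fuel (l.drop (k+1)))

/-- The minmax tree `T^m_p` of a word `l` (with distinct letters). -/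
def minmaxTree (l : List ℕ) : BTree := mmAux l.length l

/-- The word `p_1 p_2 … p_n` on the letters `{1,…,n}` associated to a permutation
`p` of `Fin n`. -/
def permList (n : ℕ) (p : Equiv.Perm (Fin n)) : List ℕ :=
  List.ofFn (fun i => (p i : ℕ) + 1)

/-- The `i`-th entry `p_i` (1-indexed) of the permutation `p`. -/
def entryAt (n : ℕ) (p : Equiv.Perm (Fin n)) (i : ℕ) : ℕ :=
  (permList n p).getD (i - 1) 0

namespace MMProof
open List Finset BTree

/-! ### Basic facts about `min?`/`max?` on ℕ lists -/

lemma min?_spec {xs : List ℕ} {a : ℕ} : xs.min? = some a ↔ a ∈ xs ∧ ∀ b ∈ xs, a ≤ b :=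
  List.min?_eq_some_iff

lemma max?_spec {xs : List ℕ} {a : ℕ} : xs.max? = some a ↔ a ∈ xs ∧ ∀ b ∈ xs, b ≤ a :=
  List.max?_eq_some_iff

lemma exists_isExtreme {l : List ℕ} (hl : l ≠ []) : ∃ x ∈ l, isExtreme l x = true := by
  obtain ⟨x, xs, rfl⟩ := List.exists_cons_of_ne_nil hl
  have h1 : (x :: xs).min? = some (xs.min?.elim x (min x)) := List.min?_cons
  have h2 := min?_spec.mp h1
  exact ⟨_, h2.1, by simp [isExtreme, h1]⟩

/-! ### Fuel lemmas for `mmAux` -/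

lemma mmAux_nil (f : ℕ) : mmAux f [] = .nil := by cases f <;> simp [mmAux]

lemma findIdx_lt {l : List ℕ} (hl : l ≠ []) :
    l.findIdx (isExtreme l) < l.length :=
  List.findIdx_lt_length_of_exists (exists_isExtreme hl)

lemma mmAux_congr : ∀ f g : ℕ, ∀ l : List ℕ, l.length ≤ f → l.length ≤ g →
    mmAux f l = mmAux g l := by
  intro f
  induction f with
  | zero => intro g l hf hg
            have : l = [] := by cases l <;> simp_all
            subst this; rw [mmAux_nil, mmAux_nil]
  | succ f ih =>
    intro g l hf hg
    rcases eq_or_ne l [] with rfl | hne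
    · rw [mmAux_nil, mmAux_nil]
    obtain ⟨g', rfl⟩ : ∃ g', g = g' + 1 := by
      have := List.length_pos_iff.mpr hne; exact ⟨g - 1, by omega⟩
    have hk := findIdx_lt hne
    set k := l.findIdx (isExtreme l) with hkdef
    have hemp : l.isEmpty = false := by simp [hne]
    rw [mmAux, mmAux, hemp]
    simp only [Bool.false_eq_true, if_false]
    have h1 : (l.take k).length ≤ f := by
      rw [List.length_take]; omega
    have h2 : (l.drop (k+1)).length ≤ f := by
      rw [List.length_drop]; omega
    rw [ih g' (l.take k) h1 (by rw [List.length_take]; omega),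
        ih g' (l.drop (k+1)) h2 (by rw [List.length_drop]; omega)]

lemma mmAux_eq_minmaxTree {f : ℕ} {l : List ℕ} (h : l.length ≤ f) :
    mmAux f l = minmaxTree l := mmAux_congr f l.length l h le_rfl

/-! ### Splitting lemma -/

lemma findIdx_append_cons {p : ℕ → Bool} {u v : List ℕ} {r : ℕ}
    (hu : ∀ x ∈ u, p x = false) (hr : p r = true) :
    (u ++ r :: v).findIdx p = u.length := by
  induction u with
  | nil => simp [List.findIdx_cons, hr]
  | cons x u ih =>
    have hx : p x = false := hu x (by simp)
    simp only [List.cons_append, List.findIdx_cons, hx, cond_false, List.length_cons]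
    rw [ih (fun y hy => hu y (by simp [hy]))]

lemma minmaxTree_split {u v : List ℕ} {r : ℕ}
    (hu : ∀ x ∈ u, isExtreme (u ++ r :: v) x = false)
    (hr : isExtreme (u ++ r :: v) r = true) :
    minmaxTree (u ++ r :: v) = .node r (minmaxTree u) (minmaxTree v) := by
  set l := u ++ r :: v with hl
  have hlen : l.length = u.length + v.length + 1 := by simp [hl]; omega
  have hfi : l.findIdx (isExtreme l) = u.length := findIdx_append_cons hu hr
  have hne : l ≠ [] := by simp [hl]
  have hemp : l.isEmpty = false := by simp [hne]
  obtain ⟨f, hf⟩ : ∃ f, l.length = f + 1 := ⟨u.length + v.length, by omega⟩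
  rw [minmaxTree, hf, mmAux, hemp]
  simp only [Bool.false_eq_true, if_false, hfi]
  have hgd : l.getD u.length 0 = r := by
    rw [hl, List.getD_eq_getElem?_getD, List.getElem?_append_right le_rfl]
    simp
  have htk : l.take u.length = u := by rw [hl]; exact List.take_left
  have hdr : l.drop (u.length + 1) = v := by
    rw [hl, show u ++ r :: v = (u ++ [r]) ++ v by simp,
        show u.length + 1 = (u ++ [r]).length by simp]
    exact List.drop_left
  have hul : (l.take u.length).length ≤ f := by rw [htk]; omega
  have hvl : (l.drop (u.length+1)).length ≤ f := by rw [hdr]; omega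
  rw [htk] at hul; rw [hdr] at hvl
  rw [hgd, htk, hdr, mmAux_eq_minmaxTree hul, mmAux_eq_minmaxTree hvl]

/-! ### Membership in the tree -/

lemma mem_of_memB : ∀ l : List ℕ, ∀ x : ℕ, (minmaxTree l).memB x = true → x ∈ l := by
  have H : ∀ f, ∀ l : List ℕ, l.length ≤ f → ∀ x, (mmAux f l).memB x = true → x ∈ l := by
    intro f
    induction f with
    | zero => intro l h x hx
              have : l = [] := by cases l <;> simp_all
              subst this; rw [mmAux_nil] at hx; simp [BTree.memB] at hx
    | succ f ih =>
      intro l h x hx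
      rcases eq_or_ne l [] with rfl | hne
      · rw [mmAux_nil] at hx; simp [BTree.memB] at hx
      have hk := findIdx_lt hne
      have hemp : l.isEmpty = false := by simp [hne]
      rw [mmAux, hemp] at hx
      simp only [Bool.false_eq_true, if_false] at hx
      set k := l.findIdx (isExtreme l) with hkdef
      rw [BTree.memB] at hx
      rcases Bool.or_eq_true_iff.mp hx with h1 | h2
      · rcases Bool.or_eq_true_iff.mp h1 with h0 | h1'
        · have : x = l.getD k 0 := by simpa using h0
          rw [this, List.getD_eq_getElem?_getD, List.getElem?_eq_getElem hk]
          simp [List.getElem_mem]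
        · have := ih (l.take k) (by rw [List.length_take]; omega) x h1'
          exact (List.take_sublist _ _).mem this
      · have := ih (l.drop (k+1)) (by rw [List.length_drop]; omega) x h2
        exact (List.drop_sublist _ _).mem this
  intro l x hx
  exact H l.length l le_rfl x hx

lemma numChildren_eq_zero_of_not_memB : ∀ t : BTree, ∀ x : ℕ, t.memB x = false →
    t.numChildren x = 0 := by
  intro t
  induction t with
  | nil => intro x _; rfl
  | node v l r ihl ihr =>
    intro x hx
    rw [BTree.memB] at hx
    simp only [Bool.or_eq_false_iff, beq_eq_false_iff_ne, ne_eq] at hx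
    rw [BTree.numChildren, if_neg hx.1.1, ihl x hx.1.2, ihr x hx.2]

lemma numChildren_minmax_of_not_mem {l : List ℕ} {x : ℕ} (h : x ∉ l) :
    (minmaxTree l).numChildren x = 0 := by
  apply numChildren_eq_zero_of_not_memB
  by_contra hB
  exact h (mem_of_memB l x (by simpa using hB))

lemma minmaxTree_ne_nil {l : List ℕ} (hl : l ≠ []) : minmaxTree l ≠ .nil := by
  obtain ⟨f, hf⟩ : ∃ f, l.length = f + 1 := by
    have := List.length_pos_iff.mpr hl; exact ⟨l.length - 1, by omega⟩
  have hemp : l.isEmpty = false := by simp [hl]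
  rw [minmaxTree, hf, mmAux, hemp]
  simp

end MMProof

namespace MMProof
open List Finset BTree
open scoped Nat

/-! ### Words of a finset -/

noncomputable def permsF (S : Finset ℕ) : Finset (List ℕ) := S.toList.permutations.toFinset

def PredJ (j : ℕ) (l : List ℕ) : Prop := (minmaxTree l).numChildren (l.getD (j-1) 0) = 1

instance (j : ℕ) : DecidablePred (PredJ j) := fun l => by unfold PredJ; infer_instance

noncomputable def cnt (S : Finset ℕ) (j : ℕ) : ℕ := ((permsF S).filter (PredJ j)).card

lemma mem_permsF {S : Finset ℕ} {l : List ℕ} : l ∈ permsF S ↔ l.Perm S.toList := by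
  simp [permsF, List.mem_permutations]

lemma mem_permsF_val {S : Finset ℕ} {l : List ℕ} :
    l ∈ permsF S ↔ (↑l : Multiset ℕ) = S.val := by
  rw [mem_permsF, ← Multiset.coe_eq_coe]
  constructor
  · intro h; rw [h]; exact Multiset.coe_toList _
  · intro h; rw [h]; exact (Multiset.coe_toList _).symm

lemma card_permsF (S : Finset ℕ) : (permsF S).card = S.card ! := by
  rw [permsF, List.toFinset_card_of_nodup (List.nodup_permutations _ S.nodup_toList),
    List.length_permutations, Finset.length_toList]

lemma length_of_mem_permsF {S : Finset ℕ} {l : List ℕ} (h : l ∈ permsF S) :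
    l.length = S.card := by
  rw [(mem_permsF.mp h).length_eq, Finset.length_toList]

lemma nodup_of_mem_permsF {S : Finset ℕ} {l : List ℕ} (h : l ∈ permsF S) : l.Nodup :=
  (mem_permsF.mp h).nodup_iff.mpr S.nodup_toList

lemma mem_of_mem_permsF {S : Finset ℕ} {l : List ℕ} (h : l ∈ permsF S) {x : ℕ} :
    x ∈ l ↔ x ∈ S := by
  rw [(mem_permsF.mp h).mem_iff, Finset.mem_toList]

/-! ### extremes -/

section Decomp

variable {S : Finset ℕ}

lemma Sne (hm : 2 ≤ S.card) : S.Nonempty := Finset.card_pos.mp (by omega)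

variable (hm : 2 ≤ S.card)

lemma min?_of_mem_permsF {l : List ℕ} (hl : l ∈ permsF S) :
    l.min? = some (S.min' (Sne hm)) := by
  rw [min?_spec]
  exact ⟨(mem_of_mem_permsF hl).mpr (S.min'_mem _),
    fun c hc => S.min'_le c ((mem_of_mem_permsF hl).mp hc)⟩

lemma max?_of_mem_permsF {l : List ℕ} (hl : l ∈ permsF S) :
    l.max? = some (S.max' (Sne hm)) := by
  rw [max?_spec]
  exact ⟨(mem_of_mem_permsF hl).mpr (S.max'_mem _),
    fun c hc => S.le_max' c ((mem_of_mem_permsF hl).mp hc)⟩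

lemma isExtreme_iff {l : List ℕ} (hl : l ∈ permsF S) (x : ℕ) :
    isExtreme l x = true ↔ x = S.min' (Sne hm) ∨ x = S.max' (Sne hm) := by
  rw [isExtreme, min?_of_mem_permsF hm hl, max?_of_mem_permsF hm hl]
  simp only [Bool.or_eq_true, beq_iff_eq, Option.some.injEq]
  omega

lemma min_ne_max : S.min' (Sne hm) ≠ S.max' (Sne hm) :=
  ne_of_lt (S.min'_lt_max'_of_card (by omega))

/-! ### Branch sets -/

noncomputable def Ebr (S : Finset ℕ) (r : ℕ) (T : Finset ℕ) : Finset (List ℕ) :=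
  ((permsF T) ×ˢ (permsF ((S.erase r) \ T))).image (fun uv => uv.1 ++ r :: uv.2)

lemma mem_Ebr {S : Finset ℕ} {r : ℕ} {T : Finset ℕ} {l : List ℕ} :
    l ∈ Ebr S r T ↔ ∃ u v, u ∈ permsF T ∧ v ∈ permsF ((S.erase r) \ T) ∧
      l = u ++ r :: v := by
  simp only [Ebr, Finset.mem_image, Finset.mem_product, Prod.exists]
  constructor
  · rintro ⟨u, v, ⟨h1, h2⟩, h3⟩; exact ⟨u, v, h1, h2, h3.symm⟩
  · rintro ⟨u, v, h1, h2, h3⟩; exact ⟨u, v, ⟨h1, h2⟩, h3.symm⟩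

variable {r : ℕ} {T : Finset ℕ}
  (hr : r ∈ ({S.min' (Sne hm), S.max' (Sne hm)} : Finset ℕ))
  (hT : T ∈ (S \ {S.min' (Sne hm), S.max' (Sne hm)}).powerset)

include hm hr hT in
lemma branch_facts : r ∈ S ∧ r ∉ T ∧ T ⊆ S.erase r ∧ T ⊆ S := by
  have hTs : T ⊆ S \ {S.min' (Sne hm), S.max' (Sne hm)} := Finset.mem_powerset.mp hT
  simp only [Finset.mem_insert, Finset.mem_singleton] at hr
  have hrS : r ∈ S := by
    rcases hr with rfl | rfl
    exacts [S.min'_mem _, S.max'_mem _]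
  have hnT : ∀ x ∈ T, x ∈ S ∧ x ≠ S.min' (Sne hm) ∧ x ≠ S.max' (Sne hm) := by
    intro x hx
    have := hTs hx
    simp only [Finset.mem_sdiff, Finset.mem_insert, Finset.mem_singleton] at this
    tauto
  refine ⟨hrS, fun hrT => ?_, fun x hx => ?_, fun x hx => (hnT x hx).1⟩
  · rcases hr with rfl | rfl
    exacts [(hnT _ hrT).2.1 rfl, (hnT _ hrT).2.2 rfl]
  · obtain ⟨h1, h2, h3⟩ := hnT x hx
    rw [Finset.mem_erase]
    refine ⟨?_, h1⟩
    rcases hr with rfl | rfl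
    exacts [h2, h3]

include hm hr hT in
lemma append_mem_permsF {u v : List ℕ}
    (hu : u ∈ permsF T) (hv : v ∈ permsF ((S.erase r) \ T)) :
    u ++ r :: v ∈ permsF S := by
  obtain ⟨hrS, hrT, hTe, hTS⟩ := branch_facts hm hr hT
  rw [mem_permsF_val]
  rw [mem_permsF_val] at hu hv
  have h1 : (↑(u ++ r :: v) : Multiset ℕ) = ↑u + (r ::ₘ ↑v) := by
    simp
  rw [h1, hu, hv, Finset.sdiff_val, Multiset.add_cons,
    add_tsub_cancel_of_le (Finset.val_le_iff.mpr hTe), Finset.erase_val,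
    Multiset.cons_erase (Finset.mem_def.mp hrS)]

include hm hr hT in
lemma isExtreme_branch {u v : List ℕ}
    (hu : u ∈ permsF T) (hv : v ∈ permsF ((S.erase r) \ T)) :
    (∀ x ∈ u, isExtreme (u ++ r :: v) x = false) ∧
      isExtreme (u ++ r :: v) r = true := by
  have hl : u ++ r :: v ∈ permsF S := append_mem_permsF hm hr hT hu hv
  have hTs : T ⊆ S \ {S.min' (Sne hm), S.max' (Sne hm)} := Finset.mem_powerset.mp hT
  simp only [Finset.mem_insert, Finset.mem_singleton] at hr
  constructor
  · intro x hx
    have hxT : x ∈ T := by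
      have := mem_permsF_val.mp hu
      have : x ∈ (↑u : Multiset ℕ) ↔ x ∈ T.val := by rw [this]
      rw [Finset.mem_def]
      exact this.mp (by simpa using hx)
    have := hTs hxT
    simp only [Finset.mem_sdiff, Finset.mem_insert, Finset.mem_singleton] at this
    rw [← Bool.not_eq_true]
    rw [isExtreme_iff hm hl]
    tauto
  · rw [isExtreme_iff hm hl]
    exact hr

include hm hr hT in
lemma minmaxTree_branch {u v : List ℕ}
    (hu : u ∈ permsF T) (hv : v ∈ permsF ((S.erase r) \ T)) :
    minmaxTree (u ++ r :: v) = .node r (minmaxTree u) (minmaxTree v) := by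
  obtain ⟨h1, h2⟩ := isExtreme_branch hm hr hT hu hv
  exact minmaxTree_split h1 h2

include hm hr hT in
lemma findIdx_branch {u v : List ℕ}
    (hu : u ∈ permsF T) (hv : v ∈ permsF ((S.erase r) \ T)) :
    (u ++ r :: v).findIdx (isExtreme (u ++ r :: v)) = u.length := by
  obtain ⟨h1, h2⟩ := isExtreme_branch hm hr hT hu hv
  exact findIdx_append_cons h1 h2

include hm in
lemma permsF_eq_biUnion :
    permsF S = ((({S.min' (Sne hm), S.max' (Sne hm)} : Finset ℕ) ×ˢ
        (S \ {S.min' (Sne hm), S.max' (Sne hm)}).powerset)).biUnion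
      (fun rT => Ebr S rT.1 rT.2) := by
  ext l
  simp only [Finset.mem_biUnion, Finset.mem_product, Prod.exists]
  constructor
  · intro hl
    have hne : l ≠ [] := by
      intro h
      have := length_of_mem_permsF hl
      rw [h] at this
      simp at this
      omega
    have hnd : l.Nodup := nodup_of_mem_permsF hl
    have hk := findIdx_lt hne
    set k := l.findIdx (isExtreme l) with hkdef
    set r := l[k] with hrdef
    have hsplit : l = l.take k ++ r :: l.drop (k+1) := by
      conv_lhs => rw [← List.take_append_drop k l]
      congr 1
      rw [hrdef, List.getElem_cons_drop]
    set u := l.take k with hudef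
    set v := l.drop (k+1) with hvdef
    have hund : u.Nodup := (List.take_sublist _ _).nodup hnd
    set T : Finset ℕ := ⟨(↑u : Multiset ℕ), by exact Multiset.coe_nodup.mpr hund⟩ with hTdef
    have hrext : isExtreme l r = true := List.findIdx_getElem (w := hk)
    have huext : ∀ x ∈ u, isExtreme l x = false := by
      intro x hx
      obtain ⟨i, hi, rfl⟩ := List.mem_iff_getElem.mp hx
      have hiu : i < k := by
        have := hi
        rw [hudef, List.length_take] at this
        omega
      have : u[i] = l[i] := List.getElem_take
      rw [this]
      exact List.not_of_lt_findIdx (by omega)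
    refine ⟨r, T, ⟨?_, ?_⟩, ?_⟩
    · simp only [Finset.mem_insert, Finset.mem_singleton]
      exact (isExtreme_iff hm hl r).mp hrext
    · rw [Finset.mem_powerset]
      intro x hx
      have hxu : x ∈ u := by
        simpa [hTdef, Finset.mem_def] using hx
      have hxl : x ∈ l := (List.take_sublist _ _).mem hxu
      rw [Finset.mem_sdiff]
      refine ⟨(mem_of_mem_permsF hl).mp hxl, ?_⟩
      have := huext x hxu
      rw [← Bool.not_eq_true, isExtreme_iff hm hl] at this
      simpa [Finset.mem_insert, Finset.mem_singleton] using this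
    · rw [mem_Ebr]
      refine ⟨u, v, ?_, ?_, hsplit⟩
      · exact mem_permsF_val.mpr rfl
      · rw [mem_permsF_val, Finset.sdiff_val, Finset.erase_val]
        have hlval : (↑l : Multiset ℕ) = S.val := mem_permsF_val.mp hl
        have hlv2 : (↑l : Multiset ℕ) = ↑u + (r ::ₘ ↑v) := by
          conv_lhs => rw [hsplit]
          simp
        have : S.val.erase r = ↑u + ↑v := by
          rw [← hlval, hlv2, Multiset.erase_add_right_pos _ (Multiset.mem_cons_self r _),
            Multiset.erase_cons_head]
        rw [this]
        show (↑v : Multiset ℕ) = ↑u + ↑v - ↑u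
        rw [add_tsub_cancel_left]
  · rintro ⟨r, T, ⟨hr, hT⟩, hl⟩
    rw [mem_Ebr] at hl
    obtain ⟨u, v, hu, hv, rfl⟩ := hl
    exact append_mem_permsF hm (by simpa using hr) (by rwa [Finset.mem_powerset] at hT ⊢) hu hv

end Decomp

end MMProof

namespace MMProof
open List Finset BTree
open scoped Nat

/-! ### The count table and branch counts -/

def t1 (m j : ℕ) : ℕ :=
  if j = m then 0 else if j = 1 ∨ j = m - 1 then (m !) - (m !) / 3 else (m !) / 3

def g (m j s : ℕ) : ℕ :=
  if j ≤ s then t1 s j * (m - 1 - s)!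
  else if j = s + 1 then (if s = 0 then (m - 1)! else 0)
  else s ! * t1 (m - 1 - s) (j - s - 1)

section BranchCard

variable {S : Finset ℕ} (hm : 2 ≤ S.card) {r : ℕ} {T : Finset ℕ}
  (hr : r ∈ ({S.min' (Sne hm), S.max' (Sne hm)} : Finset ℕ))
  (hT : T ∈ (S \ {S.min' (Sne hm), S.max' (Sne hm)}).powerset)

include hm hr hT in
lemma card_extreme_pair : ({S.min' (Sne hm), S.max' (Sne hm)} : Finset ℕ).card = 2 := by
  rw [Finset.card_insert_of_notMem (by simp [min_ne_max hm]), Finset.card_singleton]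

include hm hr hT in
lemma Tcard_le : T.card ≤ S.card - 2 := by
  have h1 : T ⊆ S \ {S.min' (Sne hm), S.max' (Sne hm)} := Finset.mem_powerset.mp hT
  have h2 := Finset.card_le_card h1
  have h3 : ({S.min' (Sne hm), S.max' (Sne hm)} : Finset ℕ) ⊆ S := by
    intro x hx
    simp only [Finset.mem_insert, Finset.mem_singleton] at hx
    rcases hx with rfl | rfl
    exacts [S.min'_mem _, S.max'_mem _]
  rw [Finset.card_sdiff_of_subset h3, card_extreme_pair hm hr hT] at h2
  omega

include hm hr hT in
lemma Vcard (hrS : r ∈ S) (hTe : T ⊆ S.erase r) :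
    ((S.erase r) \ T).card = S.card - 1 - T.card := by
  rw [Finset.card_sdiff_of_subset hTe, Finset.card_erase_of_mem hrS]

include hm hr hT in
lemma card_filter_Ebr (j : ℕ) (hj1 : 1 ≤ j) (hj2 : j ≤ S.card) :
    ((Ebr S r T).filter (PredJ j)).card =
      if j ≤ T.card then cnt T j * (S.card - 1 - T.card)!
      else if j = T.card + 1 then (if T.card = 0 then (S.card - 1)! else 0)
      else T.card ! * cnt ((S.erase r) \ T) (j - T.card - 1) := by
  obtain ⟨hrS, hrT, hTe, hTS⟩ := branch_facts hm hr hT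
  have hVc : ((S.erase r) \ T).card = S.card - 1 - T.card := Vcard hm hr hT hrS hTe
  have hTc : T.card ≤ S.card - 2 := Tcard_le hm hr hT
  have hinj : Set.InjOn (fun uv : List ℕ × List ℕ => uv.1 ++ r :: uv.2)
      ↑((permsF T) ×ˢ (permsF ((S.erase r) \ T))) := by
    rintro ⟨u, v⟩ h ⟨u', v'⟩ h' heq
    simp only [Finset.coe_product, Set.mem_prod, Finset.mem_coe] at h h'
    have hlen : u.length = u'.length := by
      rw [length_of_mem_permsF h.1, length_of_mem_permsF h'.1]
    obtain ⟨h1, h2⟩ := List.append_inj heq hlen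
    simp only at h2
    obtain ⟨-, h3⟩ := List.cons.injEq .. ▸ (by exact h2 : r :: v = r :: v')
    · exact Prod.ext h1 (by injection h2)
  rw [Ebr, Finset.filter_image,
    Finset.card_image_of_injOn (hinj.mono (by exact_mod_cast Finset.filter_subset _ _))]
  by_cases hc1 : j ≤ T.card
  · -- position inside u
    have key : ∀ uv ∈ (permsF T) ×ˢ (permsF ((S.erase r) \ T)),
        (PredJ j (uv.1 ++ r :: uv.2) ↔ PredJ j uv.1) := by
      rintro ⟨u, v⟩ huv
      rw [Finset.mem_product] at huv
      obtain ⟨hu, hv⟩ := huv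
      have hulen : u.length = T.card := length_of_mem_permsF hu
      have htree := minmaxTree_branch hm hr hT hu hv
      have hgd : (u ++ r :: v).getD (j-1) 0 = u.getD (j-1) 0 := by
        rw [List.getD_eq_getElem?_getD, List.getD_eq_getElem?_getD,
          List.getElem?_append_left (by omega)]
      have hxu : u.getD (j-1) 0 ∈ u := by
        rw [List.getD_eq_getElem _ _ (by omega)]
        exact List.getElem_mem _
      have hxT : u.getD (j-1) 0 ∈ T := (mem_of_mem_permsF hu).mp hxu
      have hxr : u.getD (j-1) 0 ≠ r := fun h => hrT (h ▸ hxT)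
      have hxv : u.getD (j-1) 0 ∉ v := by
        intro h
        have := (mem_of_mem_permsF hv).mp h
        rw [Finset.mem_sdiff] at this
        exact this.2 hxT
      show (minmaxTree (u ++ r :: v)).numChildren ((u ++ r :: v).getD (j-1) 0) = 1 ↔ _
      rw [htree, hgd, BTree.numChildren, if_neg hxr,
        numChildren_minmax_of_not_mem hxv, add_zero]
      rfl
    rw [Finset.filter_congr key, if_pos hc1]
    have : ((permsF T) ×ˢ (permsF ((S.erase r) \ T))).filter (fun uv => PredJ j uv.1)
        = ((permsF T).filter (PredJ j)) ×ˢ (permsF ((S.erase r) \ T)) := by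
      ext ⟨u, v⟩
      simp only [Finset.mem_filter, Finset.mem_product]
      tauto
    rw [this, Finset.card_product, card_permsF, hVc]
    rfl
  · by_cases hc2 : j = T.card + 1
    · -- position at the root
      have key : ∀ uv ∈ (permsF T) ×ˢ (permsF ((S.erase r) \ T)),
          (PredJ j (uv.1 ++ r :: uv.2) ↔ T.card = 0) := by
        rintro ⟨u, v⟩ huv
        rw [Finset.mem_product] at huv
        obtain ⟨hu, hv⟩ := huv
        have hulen : u.length = T.card := length_of_mem_permsF hu
        have hvlen : v.length = S.card - 1 - T.card := by
          rw [length_of_mem_permsF hv, hVc]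
        have htree := minmaxTree_branch hm hr hT hu hv
        have hgd : (u ++ r :: v).getD (j-1) 0 = r := by
          rw [List.getD_eq_getElem?_getD, List.getElem?_append_right (by omega)]
          have : j - 1 - u.length = 0 := by omega
          rw [this]
          simp
        have hvne : v ≠ [] := by
          intro h
          rw [h] at hvlen
          simp at hvlen
          omega
        show (minmaxTree (u ++ r :: v)).numChildren ((u ++ r :: v).getD (j-1) 0) = 1 ↔ _
        rw [htree, hgd, BTree.numChildren, if_pos rfl,
          if_neg (minmaxTree_ne_nil hvne)]
        by_cases hu0 : T.card = 0
        · have : u = [] := by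
            rw [← List.length_eq_zero_iff]; omega
          rw [this]
          have : minmaxTree ([] : List ℕ) = .nil := rfl
          rw [this, if_pos rfl]
          simp [hu0]
        · have : u ≠ [] := by
            intro h
            rw [h] at hulen
            simp at hulen
            omega
          rw [if_neg (minmaxTree_ne_nil this)]
          simp [hu0]
      rw [Finset.filter_congr key, Finset.filter_const, if_neg hc1, if_pos hc2]
      by_cases hu0 : T.card = 0
      · rw [if_pos hu0, if_pos hu0, Finset.card_product, card_permsF, card_permsF,
          hu0, hVc, hu0]
        simp [Nat.factorial]
      · rw [if_neg hu0, if_neg hu0, Finset.card_empty]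
    · -- position inside v
      have hj3 : T.card + 2 ≤ j := by omega
      have key : ∀ uv ∈ (permsF T) ×ˢ (permsF ((S.erase r) \ T)),
          (PredJ j (uv.1 ++ r :: uv.2) ↔ PredJ (j - T.card - 1) uv.2) := by
        rintro ⟨u, v⟩ huv
        rw [Finset.mem_product] at huv
        obtain ⟨hu, hv⟩ := huv
        have hulen : u.length = T.card := length_of_mem_permsF hu
        have hvlen : v.length = S.card - 1 - T.card := by
          rw [length_of_mem_permsF hv, hVc]
        have htree := minmaxTree_branch hm hr hT hu hv
        have hgd : (u ++ r :: v).getD (j-1) 0 = v.getD (j - T.card - 2) 0 := by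
          rw [List.getD_eq_getElem?_getD, List.getElem?_append_right (by omega)]
          have : j - 1 - u.length = (j - T.card - 2) + 1 := by omega
          rw [this, List.getElem?_cons_succ, List.getD_eq_getElem?_getD]
        have hxv : v.getD (j - T.card - 2) 0 ∈ v := by
          rw [List.getD_eq_getElem _ _ (by omega)]
          exact List.getElem_mem _
        have hxV : v.getD (j - T.card - 2) 0 ∈ (S.erase r) \ T :=
          (mem_of_mem_permsF hv).mp hxv
        have hxr : v.getD (j - T.card - 2) 0 ≠ r := by
          intro h
          rw [Finset.mem_sdiff, Finset.mem_erase] at hxV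
          exact hxV.1.1 h
        have hxu : v.getD (j - T.card - 2) 0 ∉ u := by
          intro h
          have := (mem_of_mem_permsF hu).mp h
          rw [Finset.mem_sdiff] at hxV
          exact hxV.2 this
        show (minmaxTree (u ++ r :: v)).numChildren ((u ++ r :: v).getD (j-1) 0) = 1 ↔ _
        rw [htree, hgd, BTree.numChildren, if_neg hxr,
          numChildren_minmax_of_not_mem hxu, zero_add]
        show _ ↔ (minmaxTree v).numChildren (v.getD (j - T.card - 1 - 1) 0) = 1
        have : j - T.card - 1 - 1 = j - T.card - 2 := by omega
        rw [this]
      rw [Finset.filter_congr key, if_neg hc1, if_neg hc2]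
      have : ((permsF T) ×ˢ (permsF ((S.erase r) \ T))).filter (fun uv => PredJ (j - T.card - 1) uv.2)
          = (permsF T) ×ˢ ((permsF ((S.erase r) \ T)).filter (PredJ (j - T.card - 1))) := by
        ext ⟨u, v⟩
        simp only [Finset.mem_filter, Finset.mem_product]
        tauto
      rw [this, Finset.card_product, card_permsF]
      rfl

end BranchCard

end MMProof

namespace MMProof
open Finset
open scoped Nat

/-! ### Arithmetic helpers -/

lemma fac3 {l : ℕ} (h : 3 ≤ l) : 3 * ((l !) / 3) = l ! :=
  Nat.mul_div_cancel' (Nat.dvd_factorial (by norm_num) h)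

lemma t1_self (m : ℕ) : t1 m m = 0 := by simp [t1]

lemma three_t1_last {l : ℕ} (h : 3 ≤ l) : 3 * t1 l (l - 1) = 2 * (l !) := by
  rw [t1, if_neg (by omega), if_pos (Or.inr rfl)]
  have := fac3 h
  omega

lemma three_t1_one {l : ℕ} (h : 3 ≤ l) : 3 * t1 l 1 = 2 * (l !) := by
  rw [t1, if_neg (by omega), if_pos (Or.inl rfl)]
  have := fac3 h
  omega

lemma three_t1_mid {l j : ℕ} (h2 : 2 ≤ j) (h : j ≤ l - 2) : 3 * t1 l j = l ! := by
  have hl : 4 ≤ l := by omega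
  rw [t1, if_neg (by omega), if_neg (by omega)]
  exact fac3 (by omega)

lemma t1_21 : t1 2 1 = 2 := by decide

lemma keyB {m s : ℕ} (hm : 2 ≤ m) (hs : s ≤ m - 2) :
    (m - 2).choose s * (s !) * ((m - 1 - s)!) = (m - 2)! * (m - 1 - s) := by
  have h1 : m - 1 - s = (m - 2 - s) + 1 := by omega
  have h2 := Nat.choose_mul_factorial_mul_factorial hs
  rw [h1, Nat.factorial_succ, ← h2]
  ring

lemma gaussR (p q : ℕ) (h : p ≤ q + 1) :
    2 * ∑ t ∈ Finset.range p, (q - t) = p * (2*q + 1 - p) := by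
  induction p with
  | zero => simp
  | succ p ih =>
    rw [Finset.sum_range_succ, Nat.mul_add, ih (by omega)]
    obtain ⟨d, rfl⟩ : ∃ d, q = p + d := ⟨q - p, by omega⟩
    have e1 : 2*(p+d) + 1 - p = p + 2*d + 1 := by omega
    have e2 : (p + d) - p = d := by omega
    have e3 : 2*(p+d) + 1 - (p+1) = p + 2*d := by omega
    rw [e1, e2, e3]
    ring

/-! ### The main arithmetic identity -/

lemma arith (m j : ℕ) (hm : 2 ≤ m) (hj1 : 1 ≤ j) (hj2 : j ≤ m) :
    2 * ∑ s ∈ Finset.range (m - 1), (m - 2).choose s * g m j s = t1 m j := by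
  by_cases hjm : j = m
  · subst hjm
    have hz : ∑ s ∈ Finset.range (j - 1), (j - 2).choose s * g j j s = 0 := by
      apply Finset.sum_eq_zero
      intro s hs
      rw [Finset.mem_range] at hs
      rw [g, if_neg (by omega), if_neg (by omega)]
      have hjj : j - s - 1 = j - 1 - s := by omega
      rw [hjj, t1_self, mul_zero, mul_zero]
    rw [hz, t1_self, mul_zero]
  rcases Nat.lt_or_ge m 5 with h5 | h5
  · interval_cases m <;> interval_cases j <;> first
      | (exact absurd rfl hjm)
      | decide
  obtain ⟨k, rfl⟩ : ∃ k, m = k + 5 := ⟨m - 5, by omega⟩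
  rw [show k + 5 - 1 = k + 4 from rfl, show k + 5 - 2 = k + 3 from rfl]
  apply Nat.eq_of_mul_eq_mul_left (show 0 < 6 by norm_num)
  have hF1 : (k+5)! = (k+5) * ((k+4) * ((k+3)!)) := by
    rw [show (k+5)! = (k+5) * ((k+4)!) from Nat.factorial_succ (k+4),
      show (k+4)! = (k+4) * ((k+3)!) from Nat.factorial_succ (k+3)]
  by_cases hjb : j = k + 4
  · -- j = m - 1
    subst hjb
    have hsplit : ∑ s ∈ Finset.range (k+4), (k+3).choose s * g (k+5) (k+4) s
        = (∑ s ∈ Finset.Ico 0 (k+2), (k+3).choose s * g (k+5) (k+4) s)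
          + ((k+3).choose (k+2) * g (k+5) (k+4) (k+2)
             + (k+3).choose (k+3) * g (k+5) (k+4) (k+3)) := by
      rw [Finset.range_eq_Ico,
        ← Finset.sum_Ico_consecutive _ (Nat.zero_le (k+2)) (by omega)]
      congr 1
      rw [Finset.sum_Ico_eq_sum_range, show k+4-(k+2) = 2 by omega]
      rw [Finset.sum_range_succ, Finset.sum_range_succ, Finset.sum_range_zero,
        zero_add, show k+2+0 = k+2 by omega, show k+2+1 = k+3 by omega]
    have hpc : ∀ s ∈ Finset.Ico 0 (k+2),
        3 * ((k+3).choose s * g (k+5) (k+4) s) = 2 * ((k+3)! * (k+4-s)) := by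
      intro s hs
      rw [Finset.mem_Ico] at hs
      rw [g, if_neg (by omega), if_neg (by omega),
        show k+5-1-s = k+4-s from rfl]
      have h3 : 3 * t1 (k+4-s) (k+4-s-1) = 2 * ((k+4-s)!) :=
        three_t1_last (by omega)
      have hB := keyB (m := k+5) (by omega) (show s ≤ k+5-2 by omega)
      rw [show k+5-2 = k+3 from rfl, show k+5-1-s = k+4-s from rfl] at hB
      calc 3 * ((k+3).choose s * (s ! * t1 (k+4-s) (k+4-s-1)))
          = (k+3).choose s * s ! * (3 * t1 (k+4-s) (k+4-s-1)) := by ring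
        _ = (k+3).choose s * s ! * (2 * ((k+4-s)!)) := by rw [h3]
        _ = 2 * ((k+3).choose s * s ! * ((k+4-s)!)) := by ring
        _ = 2 * ((k+3)! * (k+4-s)) := by rw [hB]
    have hA : 3 * ∑ s ∈ Finset.Ico 0 (k+2), (k+3).choose s * g (k+5) (k+4) s
        = 2 * ((k+3)! * ∑ s ∈ Finset.Ico 0 (k+2), (k+4-s)) := by
      rw [Finset.mul_sum, Finset.sum_congr rfl hpc, ← Finset.mul_sum, ← Finset.mul_sum]
    have hG : 2 * ∑ s ∈ Finset.Ico 0 (k+2), (k+4-s) = (k+2) * (k+7) := by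
      rw [← Finset.range_eq_Ico]
      have := gaussR (k+2) (k+4) (by omega)
      rw [show 2*(k+4)+1-(k+2) = k+7 by omega] at this
      exact this
    have h1v : 3 * ((k+3).choose (k+2) * g (k+5) (k+4) (k+2)) = 6 * ((k+3)!) := by
      rw [g, if_neg (by omega), if_neg (by omega),
        show k+5-1-(k+2) = 2 from by omega, show k+4-(k+2)-1 = 1 by omega, t1_21]
      have hB := keyB (m := k+5) (by omega) (show k+2 ≤ k+5-2 by omega)
      rw [show k+5-2 = k+3 from rfl, show k+5-1-(k+2) = 2 from by omega] at hB
      calc 3 * ((k+3).choose (k+2) * ((k+2)! * 2))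
          = 3 * ((k+3).choose (k+2) * (k+2)! * (2!)) := by
            rw [show (2! : ℕ) = 2 from rfl]; ring
        _ = 3 * ((k+3)! * 2) := by rw [hB]
        _ = 6 * ((k+3)!) := by ring
    have h2v : g (k+5) (k+4) (k+3) = 0 := by
      rw [g, if_neg (by omega), if_pos (by omega), if_neg (by omega)]
    have htar : 6 * t1 (k+5) (k+4) = 4 * ((k+5)!) := by
      have := three_t1_last (l := k+5) (by omega)
      rw [show k+5-1 = k+4 from rfl] at this
      omega
    rw [hsplit, h2v, mul_zero, add_zero, htar, hF1]
    calc 6 * (2 * (∑ s ∈ Finset.Ico 0 (k+2), (k+3).choose s * g (k+5) (k+4) s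
            + (k+3).choose (k+2) * g (k+5) (k+4) (k+2)))
        = 2 * (2 * (3 * ∑ s ∈ Finset.Ico 0 (k+2), (k+3).choose s * g (k+5) (k+4) s))
          + 4 * (3 * ((k+3).choose (k+2) * g (k+5) (k+4) (k+2))) := by ring
      _ = 2 * (2 * (2 * ((k+3)! * ∑ s ∈ Finset.Ico 0 (k+2), (k+4-s))))
          + 4 * (6 * ((k+3)!)) := by rw [hA, h1v]
      _ = 4 * ((k+3)! * (2 * ∑ s ∈ Finset.Ico 0 (k+2), (k+4-s))) + 24 * ((k+3)!) := by
            ring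
      _ = 4 * ((k+3)! * ((k+2) * (k+7))) + 24 * ((k+3)!) := by rw [hG]
      _ = 4 * ((k+5) * ((k+4) * ((k+3)!))) := by ring
  by_cases hj1' : j = 1
  · -- j = 1
    subst hj1'
    have hsplit : ∑ s ∈ Finset.range (k+4), (k+3).choose s * g (k+5) 1 s
        = ((k+3).choose 0 * g (k+5) 1 0 + (k+3).choose 1 * g (k+5) 1 1
            + (k+3).choose 2 * g (k+5) 1 2)
          + ∑ s ∈ Finset.Ico 3 (k+4), (k+3).choose s * g (k+5) 1 s := by
      rw [Finset.range_eq_Ico,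
        ← Finset.sum_Ico_consecutive _ (Nat.zero_le 3) (by omega)]
      congr 1
      rw [Finset.sum_Ico_eq_sum_range, show (3:ℕ) - 0 = 3 by omega]
      rw [Finset.sum_range_succ, Finset.sum_range_succ, Finset.sum_range_succ,
        Finset.sum_range_zero, zero_add]
    have h0v : (k+3).choose 0 * g (k+5) 1 0 = (k+4) * ((k+3)!) := by
      rw [g, if_neg (by omega), if_pos rfl, if_pos rfl, Nat.choose_zero_right,
        one_mul, show k+5-1 = k+4 from rfl]
      exact Nat.factorial_succ (k+3)
    have h1v : g (k+5) 1 1 = 0 := by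
      rw [g, if_pos le_rfl, t1_self, zero_mul]
    have h2v : 3 * ((k+3).choose 2 * g (k+5) 1 2) = 3 * ((k+3)! * (k+2)) := by
      rw [g, if_pos (by omega), t1_21, show k+5-1-2 = k+2 from by omega]
      have hB := keyB (m := k+5) (by omega) (show 2 ≤ k+5-2 by omega)
      rw [show k+5-2 = k+3 from rfl, show k+5-1-2 = k+2 from by omega] at hB
      calc 3 * ((k+3).choose 2 * (2 * ((k+2)!)))
          = 3 * ((k+3).choose 2 * (2!) * ((k+2)!)) := by
            rw [show (2! : ℕ) = 2 from rfl]; ring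
        _ = 3 * ((k+3)! * (k+2)) := by rw [hB]
    have hpc : ∀ s ∈ Finset.Ico 3 (k+4),
        3 * ((k+3).choose s * g (k+5) 1 s) = 2 * ((k+3)! * (k+4-s)) := by
      intro s hs
      rw [Finset.mem_Ico] at hs
      rw [g, if_pos (by omega), show k+5-1-s = k+4-s from rfl]
      have h3 : 3 * t1 s 1 = 2 * (s !) := three_t1_one (by omega)
      have hB := keyB (m := k+5) (by omega) (show s ≤ k+5-2 by omega)
      rw [show k+5-2 = k+3 from rfl, show k+5-1-s = k+4-s from rfl] at hB
      calc 3 * ((k+3).choose s * (t1 s 1 * ((k+4-s)!)))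
          = (k+3).choose s * (3 * t1 s 1) * ((k+4-s)!) := by ring
        _ = (k+3).choose s * (2 * (s !)) * ((k+4-s)!) := by rw [h3]
        _ = 2 * ((k+3).choose s * s ! * ((k+4-s)!)) := by ring
        _ = 2 * ((k+3)! * (k+4-s)) := by rw [hB]
    have hA : 3 * ∑ s ∈ Finset.Ico 3 (k+4), (k+3).choose s * g (k+5) 1 s
        = 2 * ((k+3)! * ∑ s ∈ Finset.Ico 3 (k+4), (k+4-s)) := by
      rw [Finset.mul_sum, Finset.sum_congr rfl hpc, ← Finset.mul_sum, ← Finset.mul_sum]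
    have hG : 2 * ∑ s ∈ Finset.Ico 3 (k+4), (k+4-s) = (k+1) * (k+2) := by
      rw [Finset.sum_Ico_eq_sum_range, show k+4-3 = k+1 by omega]
      have hc : ∀ t ∈ Finset.range (k+1), k+4-(3+t) = k+1-t := by
        intro t ht; omega
      rw [Finset.sum_congr rfl hc]
      have := gaussR (k+1) (k+1) (by omega)
      rw [show 2*(k+1)+1-(k+1) = k+2 by omega] at this
      exact this
    have htar : 6 * t1 (k+5) 1 = 4 * ((k+5)!) := by
      have := three_t1_one (l := k+5) (by omega)
      omega
    rw [hsplit, h1v, mul_zero, add_zero, h0v, htar, hF1]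
    calc 6 * (2 * (((k+4) * ((k+3)!) + (k+3).choose 2 * g (k+5) 1 2)
            + ∑ s ∈ Finset.Ico 3 (k+4), (k+3).choose s * g (k+5) 1 s))
        = 12 * ((k+4) * ((k+3)!))
          + 4 * (3 * ((k+3).choose 2 * g (k+5) 1 2))
          + 2 * (2 * (3 * ∑ s ∈ Finset.Ico 3 (k+4), (k+3).choose s * g (k+5) 1 s)) := by
          ring
      _ = 12 * ((k+4) * ((k+3)!)) + 4 * (3 * ((k+3)! * (k+2)))
          + 2 * (2 * (2 * ((k+3)! * ∑ s ∈ Finset.Ico 3 (k+4), (k+4-s)))) := by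
          rw [h2v, hA]
      _ = 12 * ((k+4) * ((k+3)!)) + 12 * ((k+3)! * (k+2))
          + 4 * ((k+3)! * (2 * ∑ s ∈ Finset.Ico 3 (k+4), (k+4-s))) := by ring
      _ = 12 * ((k+4) * ((k+3)!)) + 12 * ((k+3)! * (k+2))
          + 4 * ((k+3)! * ((k+1) * (k+2))) := by rw [hG]
      _ = 4 * ((k+5) * ((k+4) * ((k+3)!))) := by ring
  -- now 2 ≤ j ≤ k+3
  have hj2' : 2 ≤ j := by omega
  have hj3 : j ≤ k + 3 := by omega
  have htar : 6 * t1 (k+5) j = 2 * ((k+5)!) := by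
    have := three_t1_mid (l := k+5) hj2' (show j ≤ k+5-2 by omega)
    omega
  by_cases hd2 : j = k + 3
  · -- j = m - 2
    subst hd2
    have hsplit : ∑ s ∈ Finset.range (k+4), (k+3).choose s * g (k+5) (k+3) s
        = (∑ s ∈ Finset.Ico 0 (k+1), (k+3).choose s * g (k+5) (k+3) s)
          + ((k+3).choose (k+1) * g (k+5) (k+3) (k+1)
             + (k+3).choose (k+2) * g (k+5) (k+3) (k+2)
             + (k+3).choose (k+3) * g (k+5) (k+3) (k+3)) := by
      rw [Finset.range_eq_Ico,
        ← Finset.sum_Ico_consecutive _ (Nat.zero_le (k+1)) (by omega)]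
      congr 1
      rw [Finset.sum_Ico_eq_sum_range, show k+4-(k+1) = 3 by omega]
      rw [Finset.sum_range_succ, Finset.sum_range_succ, Finset.sum_range_succ,
        Finset.sum_range_zero, zero_add, show k+1+0 = k+1 by omega,
        show k+1+1 = k+2 by omega, show k+1+2 = k+3 by omega]
    have hpc : ∀ s ∈ Finset.Ico 0 (k+1),
        3 * ((k+3).choose s * g (k+5) (k+3) s) = (k+3)! * (k+4-s) := by
      intro s hs
      rw [Finset.mem_Ico] at hs
      rw [g, if_neg (by omega), if_neg (by omega),
        show k+5-1-s = k+4-s from rfl]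
      have h3 : 3 * t1 (k+4-s) (k+3-s-1) = (k+4-s)! := by
        have := three_t1_mid (l := k+4-s) (j := k+3-s-1) (by omega) (by omega)
        exact this
      have hB := keyB (m := k+5) (by omega) (show s ≤ k+5-2 by omega)
      rw [show k+5-2 = k+3 from rfl, show k+5-1-s = k+4-s from rfl] at hB
      calc 3 * ((k+3).choose s * (s ! * t1 (k+4-s) (k+3-s-1)))
          = (k+3).choose s * s ! * (3 * t1 (k+4-s) (k+3-s-1)) := by ring
        _ = (k+3).choose s * s ! * ((k+4-s)!) := by rw [h3]
        _ = (k+3)! * (k+4-s) := hB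
    have hA : 3 * ∑ s ∈ Finset.Ico 0 (k+1), (k+3).choose s * g (k+5) (k+3) s
        = (k+3)! * ∑ s ∈ Finset.Ico 0 (k+1), (k+4-s) := by
      rw [Finset.mul_sum, Finset.sum_congr rfl hpc, ← Finset.mul_sum]
    have hG : 2 * ∑ s ∈ Finset.Ico 0 (k+1), (k+4-s) = (k+1) * (k+8) := by
      rw [← Finset.range_eq_Ico]
      have := gaussR (k+1) (k+4) (by omega)
      rw [show 2*(k+4)+1-(k+1) = k+8 by omega] at this
      exact this
    have h1v : 3 * ((k+3).choose (k+1) * g (k+5) (k+3) (k+1)) = 6 * ((k+3)!) := by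
      rw [g, if_neg (by omega), if_neg (by omega),
        show k+5-1-(k+1) = 3 from by omega, show k+3-(k+1)-1 = 1 by omega]
      have h3 : 3 * t1 3 1 = 2 * (3!) := three_t1_one (by omega)
      have hB := keyB (m := k+5) (by omega) (show k+1 ≤ k+5-2 by omega)
      rw [show k+5-2 = k+3 from rfl, show k+5-1-(k+1) = 3 from by omega] at hB
      calc 3 * ((k+3).choose (k+1) * ((k+1)! * t1 3 1))
          = (k+3).choose (k+1) * (k+1)! * (3 * t1 3 1) := by ring
        _ = (k+3).choose (k+1) * (k+1)! * (2 * (3!)) := by rw [h3]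
        _ = 2 * ((k+3).choose (k+1) * (k+1)! * (3!)) := by ring
        _ = 2 * ((k+3)! * 3) := by rw [hB]
        _ = 6 * ((k+3)!) := by ring
    have h2v : g (k+5) (k+3) (k+2) = 0 := by
      rw [g, if_neg (by omega), if_pos (by omega), if_neg (by omega)]
    have h3v : g (k+5) (k+3) (k+3) = 0 := by
      rw [g, if_pos le_rfl, t1_self, zero_mul]
    rw [hsplit, h2v, mul_zero, add_zero, h3v, mul_zero, add_zero, htar, hF1]
    calc 6 * (2 * (∑ s ∈ Finset.Ico 0 (k+1), (k+3).choose s * g (k+5) (k+3) s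
            + (k+3).choose (k+1) * g (k+5) (k+3) (k+1)))
        = 2 * (2 * (3 * ∑ s ∈ Finset.Ico 0 (k+1), (k+3).choose s * g (k+5) (k+3) s))
          + 4 * (3 * ((k+3).choose (k+1) * g (k+5) (k+3) (k+1))) := by ring
      _ = 2 * (2 * ((k+3)! * ∑ s ∈ Finset.Ico 0 (k+1), (k+4-s)))
          + 4 * (6 * ((k+3)!)) := by rw [hA, h1v]
      _ = 2 * ((k+3)! * (2 * ∑ s ∈ Finset.Ico 0 (k+1), (k+4-s))) + 24 * ((k+3)!) := by
          ring
      _ = 2 * ((k+3)! * ((k+1) * (k+8))) + 24 * ((k+3)!) := by rw [hG]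
      _ = 2 * ((k+5) * ((k+4) * ((k+3)!))) := by ring
  · -- 2 ≤ j ≤ k+2
    obtain ⟨x, rfl⟩ : ∃ x, j = x + 2 := ⟨j - 2, by omega⟩
    obtain ⟨y, rfl⟩ : ∃ y, k = x + y := ⟨k - x, by omega⟩
    have hsplit : ∑ s ∈ Finset.range (x+y+4), (x+y+3).choose s * g (x+y+5) (x+2) s
        = (∑ s ∈ Finset.Ico 0 x, (x+y+3).choose s * g (x+y+5) (x+2) s)
          + ((x+y+3).choose x * g (x+y+5) (x+2) x
             + (x+y+3).choose (x+1) * g (x+y+5) (x+2) (x+1)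
             + (x+y+3).choose (x+2) * g (x+y+5) (x+2) (x+2)
             + (x+y+3).choose (x+3) * g (x+y+5) (x+2) (x+3))
          + ∑ s ∈ Finset.Ico (x+4) (x+y+4), (x+y+3).choose s * g (x+y+5) (x+2) s := by
      rw [Finset.range_eq_Ico,
        ← Finset.sum_Ico_consecutive (m := 0) (n := x+4)
          (fun s => (x+y+3).choose s * g (x+y+5) (x+2) s) (by omega) (by omega),
        ← Finset.sum_Ico_consecutive (m := 0) (n := x)
          (fun s => (x+y+3).choose s * g (x+y+5) (x+2) s) (by omega) (by omega)]
      congr 1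
      congr 1
      rw [Finset.sum_Ico_eq_sum_range, show x+4-x = 4 by omega]
      rw [Finset.sum_range_succ, Finset.sum_range_succ, Finset.sum_range_succ,
        Finset.sum_range_succ, Finset.sum_range_zero, zero_add,
        show x+0 = x by omega]
    have hpc1 : ∀ s ∈ Finset.Ico 0 x,
        3 * ((x+y+3).choose s * g (x+y+5) (x+2) s) = (x+y+3)! * (x+y+4-s) := by
      intro s hs
      rw [Finset.mem_Ico] at hs
      rw [g, if_neg (by omega), if_neg (by omega),
        show x+y+5-1-s = x+y+4-s from rfl]
      have h3 : 3 * t1 (x+y+4-s) (x+2-s-1) = (x+y+4-s)! :=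
        three_t1_mid (by omega) (by omega)
      have hB := keyB (m := x+y+5) (by omega) (show s ≤ x+y+5-2 by omega)
      rw [show x+y+5-2 = x+y+3 from rfl, show x+y+5-1-s = x+y+4-s from rfl] at hB
      calc 3 * ((x+y+3).choose s * (s ! * t1 (x+y+4-s) (x+2-s-1)))
          = (x+y+3).choose s * s ! * (3 * t1 (x+y+4-s) (x+2-s-1)) := by ring
        _ = (x+y+3).choose s * s ! * ((x+y+4-s)!) := by rw [h3]
        _ = (x+y+3)! * (x+y+4-s) := hB
    have hA1 : 3 * ∑ s ∈ Finset.Ico 0 x, (x+y+3).choose s * g (x+y+5) (x+2) s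
        = (x+y+3)! * ∑ s ∈ Finset.Ico 0 x, (x+y+4-s) := by
      rw [Finset.mul_sum, Finset.sum_congr rfl hpc1, ← Finset.mul_sum]
    have hG1 : 2 * ∑ s ∈ Finset.Ico 0 x, (x+y+4-s) = x * (x+2*y+9) := by
      rw [← Finset.range_eq_Ico]
      have := gaussR x (x+y+4) (by omega)
      rw [show 2*(x+y+4)+1-x = x+2*y+9 by omega] at this
      exact this
    have h0v : 3 * ((x+y+3).choose x * g (x+y+5) (x+2) x)
        = 2 * ((x+y+3)! * (y+4)) := by
      rw [g, if_neg (by omega), if_neg (by omega),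
        show x+y+5-1-x = y+4 from by omega, show x+2-x-1 = 1 by omega]
      have h3 : 3 * t1 (y+4) 1 = 2 * ((y+4)!) := three_t1_one (by omega)
      have hB := keyB (m := x+y+5) (by omega) (show x ≤ x+y+5-2 by omega)
      rw [show x+y+5-2 = x+y+3 from rfl, show x+y+5-1-x = y+4 from by omega] at hB
      calc 3 * ((x+y+3).choose x * (x ! * t1 (y+4) 1))
          = (x+y+3).choose x * x ! * (3 * t1 (y+4) 1) := by ring
        _ = (x+y+3).choose x * x ! * (2 * ((y+4)!)) := by rw [h3]
        _ = 2 * ((x+y+3).choose x * x ! * ((y+4)!)) := by ring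
        _ = 2 * ((x+y+3)! * (y+4)) := by rw [hB]
    have h1v : g (x+y+5) (x+2) (x+1) = 0 := by
      rw [g, if_neg (by omega), if_pos (by omega), if_neg (by omega)]
    have h2v : g (x+y+5) (x+2) (x+2) = 0 := by
      rw [g, if_pos le_rfl, t1_self, zero_mul]
    have h3v : 3 * ((x+y+3).choose (x+3) * g (x+y+5) (x+2) (x+3))
        = 2 * ((x+y+3)! * (y+1)) := by
      rw [g, if_pos (by omega), show x+y+5-1-(x+3) = y+1 from by omega]
      have h3 : 3 * t1 (x+3) (x+2) = 2 * ((x+3)!) := by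
        have := three_t1_last (l := x+3) (by omega)
        rw [show x+3-1 = x+2 from rfl] at this
        exact this
      have hB := keyB (m := x+y+5) (by omega) (show x+3 ≤ x+y+5-2 by omega)
      rw [show x+y+5-2 = x+y+3 from rfl,
        show x+y+5-1-(x+3) = y+1 from by omega] at hB
      calc 3 * ((x+y+3).choose (x+3) * (t1 (x+3) (x+2) * ((y+1)!)))
          = (x+y+3).choose (x+3) * (3 * t1 (x+3) (x+2)) * ((y+1)!) := by ring
        _ = (x+y+3).choose (x+3) * (2 * ((x+3)!)) * ((y+1)!) := by rw [h3]
        _ = 2 * ((x+y+3).choose (x+3) * (x+3)! * ((y+1)!)) := by ring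
        _ = 2 * ((x+y+3)! * (y+1)) := by rw [hB]
    have hpc2 : ∀ s ∈ Finset.Ico (x+4) (x+y+4),
        3 * ((x+y+3).choose s * g (x+y+5) (x+2) s) = (x+y+3)! * (x+y+4-s) := by
      intro s hs
      rw [Finset.mem_Ico] at hs
      rw [g, if_pos (by omega), show x+y+5-1-s = x+y+4-s from rfl]
      have h3 : 3 * t1 s (x+2) = s ! := three_t1_mid (by omega) (by omega)
      have hB := keyB (m := x+y+5) (by omega) (show s ≤ x+y+5-2 by omega)
      rw [show x+y+5-2 = x+y+3 from rfl, show x+y+5-1-s = x+y+4-s from rfl] at hB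
      calc 3 * ((x+y+3).choose s * (t1 s (x+2) * ((x+y+4-s)!)))
          = (x+y+3).choose s * (3 * t1 s (x+2)) * ((x+y+4-s)!) := by ring
        _ = (x+y+3).choose s * s ! * ((x+y+4-s)!) := by rw [h3]
        _ = (x+y+3)! * (x+y+4-s) := hB
    have hA2 : 3 * ∑ s ∈ Finset.Ico (x+4) (x+y+4), (x+y+3).choose s * g (x+y+5) (x+2) s
        = (x+y+3)! * ∑ s ∈ Finset.Ico (x+4) (x+y+4), (x+y+4-s) := by
      rw [Finset.mul_sum, Finset.sum_congr rfl hpc2, ← Finset.mul_sum]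
    have hG2 : 2 * ∑ s ∈ Finset.Ico (x+4) (x+y+4), (x+y+4-s) = y * (y+1) := by
      rw [Finset.sum_Ico_eq_sum_range, show x+y+4-(x+4) = y by omega]
      have hc : ∀ t ∈ Finset.range y, x+y+4-(x+4+t) = y-t := by
        intro t ht; omega
      rw [Finset.sum_congr rfl hc]
      have := gaussR y y (by omega)
      rw [show 2*y+1-y = y+1 by omega] at this
      exact this
    rw [hsplit, h1v, mul_zero, add_zero, h2v, mul_zero, add_zero, htar, hF1]
    calc 6 * (2 * (∑ s ∈ Finset.Ico 0 x, (x+y+3).choose s * g (x+y+5) (x+2) s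
            + ((x+y+3).choose x * g (x+y+5) (x+2) x
               + (x+y+3).choose (x+3) * g (x+y+5) (x+2) (x+3))
            + ∑ s ∈ Finset.Ico (x+4) (x+y+4), (x+y+3).choose s * g (x+y+5) (x+2) s))
        = 2 * (2 * (3 * ∑ s ∈ Finset.Ico 0 x, (x+y+3).choose s * g (x+y+5) (x+2) s))
          + 4 * (3 * ((x+y+3).choose x * g (x+y+5) (x+2) x))
          + 4 * (3 * ((x+y+3).choose (x+3) * g (x+y+5) (x+2) (x+3)))
          + 2 * (2 * (3 * ∑ s ∈ Finset.Ico (x+4) (x+y+4),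
              (x+y+3).choose s * g (x+y+5) (x+2) s)) := by ring
      _ = 2 * (2 * ((x+y+3)! * ∑ s ∈ Finset.Ico 0 x, (x+y+4-s)))
          + 4 * (2 * ((x+y+3)! * (y+4)))
          + 4 * (2 * ((x+y+3)! * (y+1)))
          + 2 * (2 * ((x+y+3)! * ∑ s ∈ Finset.Ico (x+4) (x+y+4), (x+y+4-s))) := by
          rw [hA1, h0v, h3v, hA2]
      _ = 2 * ((x+y+3)! * (2 * ∑ s ∈ Finset.Ico 0 x, (x+y+4-s)))
          + 8 * ((x+y+3)! * (y+4)) + 8 * ((x+y+3)! * (y+1))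
          + 2 * ((x+y+3)! * (2 * ∑ s ∈ Finset.Ico (x+4) (x+y+4), (x+y+4-s))) := by
          ring
      _ = 2 * ((x+y+3)! * (x * (x+2*y+9)))
          + 8 * ((x+y+3)! * (y+4)) + 8 * ((x+y+3)! * (y+1))
          + 2 * ((x+y+3)! * (y * (y+1))) := by rw [hG1, hG2]
      _ = 2 * ((x+y+5) * ((x+y+4) * ((x+y+3)!))) := by ring
end MMProof

namespace MMProof
open List Finset BTree
open scoped Nat

section Assemble

variable {S : Finset ℕ} (hm : 2 ≤ S.card)

include hm in
lemma Ebr_disj {rT rT' : ℕ × Finset ℕ}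
    (h1 : rT ∈ (({S.min' (Sne hm), S.max' (Sne hm)} : Finset ℕ) ×ˢ
      (S \ {S.min' (Sne hm), S.max' (Sne hm)}).powerset))
    (h2 : rT' ∈ (({S.min' (Sne hm), S.max' (Sne hm)} : Finset ℕ) ×ˢ
      (S \ {S.min' (Sne hm), S.max' (Sne hm)}).powerset))
    (hne : rT ≠ rT') :
    Disjoint (Ebr S rT.1 rT.2) (Ebr S rT'.1 rT'.2) := by
  rw [Finset.disjoint_left]
  intro l hl hl'
  obtain ⟨hr, hT⟩ := Finset.mem_product.mp h1
  obtain ⟨hr', hT'⟩ := Finset.mem_product.mp h2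
  obtain ⟨u, v, hu, hv, rfl⟩ := mem_Ebr.mp hl
  obtain ⟨u', v', hu', hv', heq⟩ := mem_Ebr.mp hl'
  have hf1 := findIdx_branch hm hr hT hu hv
  have hf2 := findIdx_branch hm hr' hT' hu' hv'
  rw [← heq] at hf2
  have hlen : u.length = u'.length := by rw [hf1] at hf2; omega
  obtain ⟨hueq, hcons⟩ := List.append_inj heq hlen
  have hreq : rT.1 = rT'.1 := by injection hcons
  have hTeq : rT.2 = rT'.2 := by
    have e1 : (↑u : Multiset ℕ) = rT.2.val := mem_permsF_val.mp hu
    have e2 : (↑u' : Multiset ℕ) = rT'.2.val := mem_permsF_val.mp hu'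
    rw [hueq, e2] at e1
    exact Finset.val_inj.mp e1.symm
  exact hne (Prod.ext hreq hTeq)

lemma Mcard : (S \ {S.min' (Sne hm), S.max' (Sne hm)}).card = S.card - 2 := by
  have h3 : ({S.min' (Sne hm), S.max' (Sne hm)} : Finset ℕ) ⊆ S := by
    intro x hx
    simp only [Finset.mem_insert, Finset.mem_singleton] at hx
    rcases hx with rfl | rfl
    exacts [S.min'_mem _, S.max'_mem _]
  rw [Finset.card_sdiff_of_subset h3, Finset.card_insert_of_notMem (by simp [min_ne_max hm]),
    Finset.card_singleton]

end Assemble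

theorem cnt_eq_t1 (m : ℕ) : ∀ S : Finset ℕ, S.card = m → ∀ j, 1 ≤ j → j ≤ m →
    cnt S j = t1 m j := by
  induction m using Nat.strong_induction_on with
  | _ m IH =>
  intro S hS j hj1 hj2
  rcases Nat.lt_or_ge m 2 with hm2 | hm2
  · interval_cases m
    · omega
    · -- m = 1
      have hj : j = 1 := by omega
      subst hj
      have ht : t1 1 1 = 0 := by simp [t1]
      rw [ht, cnt, Finset.card_eq_zero, Finset.filter_eq_empty_iff]
      intro l hl
      have hlen : l.length = 1 := by rw [length_of_mem_permsF hl, hS]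
      obtain ⟨x, rfl⟩ := List.length_eq_one_iff.mp hlen
      have h0 : ∀ l' : List ℕ, mmAux 0 l' = .nil := fun _ => rfl
      have htree : minmaxTree [x] = .node ([x].getD ([x].findIdx (isExtreme [x])) 0) .nil .nil := by
        rw [minmaxTree]
        show mmAux (0+1) [x] = _
        rw [mmAux]
        simp only [List.isEmpty_cons, Bool.false_eq_true, if_false, h0]
      intro hP
      rw [PredJ, htree] at hP
      rw [BTree.numChildren] at hP
      split at hP <;> simp [BTree.numChildren] at hP
  · -- main case
    have hSm : 2 ≤ S.card := by omega
    rw [cnt, permsF_eq_biUnion hSm, Finset.filter_biUnion,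
      Finset.card_biUnion (fun x hx y hy hxy => Finset.disjoint_filter_filter
        (Ebr_disj hSm hx hy hxy))]
    have hsum : ∀ rT ∈ (({S.min' (Sne hSm), S.max' (Sne hSm)} : Finset ℕ) ×ˢ
        (S \ {S.min' (Sne hSm), S.max' (Sne hSm)}).powerset),
        ((Ebr S rT.1 rT.2).filter (PredJ j)).card = g m j rT.2.card := by
      intro rT hrT
      obtain ⟨hr, hT⟩ := Finset.mem_product.mp hrT
      obtain ⟨hrS, hrT2, hTe, hTS⟩ := branch_facts hSm hr hT
      have hsle : rT.2.card ≤ S.card - 2 := Tcard_le hSm hr hT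
      have hVc : ((S.erase rT.1) \ rT.2).card = S.card - 1 - rT.2.card :=
        Vcard hSm hr hT hrS hTe
      rw [card_filter_Ebr hSm hr hT j hj1 (by omega), g]
      by_cases hc1 : j ≤ rT.2.card
      · rw [if_pos hc1, if_pos hc1,
          IH rT.2.card (by omega) rT.2 rfl j hj1 hc1, hS]
      · rw [if_neg hc1, if_neg hc1]
        by_cases hc2 : j = rT.2.card + 1
        · rw [if_pos hc2, if_pos hc2, hS]
        · rw [if_neg hc2, if_neg hc2,
            IH (m - 1 - rT.2.card) (by omega) _ (by rw [hVc, hS]) (j - rT.2.card - 1)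
              (by omega) (by omega)]
    rw [Finset.sum_congr rfl hsum, Finset.sum_product,
      Finset.sum_pair (min_ne_max hSm)]
    have hin : ∑ T ∈ (S \ {S.min' (Sne hSm), S.max' (Sne hSm)}).powerset, g m j T.card
        = ∑ s ∈ Finset.range (m - 1), (m - 2).choose s * g m j s := by
      rw [Finset.sum_powerset, Mcard hSm, hS]
      have : m - 2 + 1 = m - 1 := by omega
      rw [this]
      apply Finset.sum_congr rfl
      intro s hs
      have : ∀ T ∈ Finset.powersetCard s (S \ {S.min' (Sne hSm), S.max' (Sne hSm)}),
          g m j T.card = g m j s := by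
        intro T hT
        rw [(Finset.mem_powersetCard.mp hT).2]
      rw [Finset.sum_congr rfl this, Finset.sum_const, Finset.card_powersetCard,
        Mcard hSm, hS, smul_eq_mul]
    rw [hin, ← two_mul]
    exact arith m j hm2 hj1 hj2

end MMProof

namespace MMProof
open List Finset BTree
open scoped Nat

lemma permList_mem_permsF {n : ℕ} (p : Equiv.Perm (Fin n)) :
    permList n p ∈ permsF (Finset.Icc 1 n) := by
  rw [mem_permsF]
  apply List.perm_of_nodup_nodup_toFinset_eq
  · rw [permList, List.nodup_ofFn]
    intro i j hij
    simp only at hij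
    have : p i = p j := by
      apply Fin.ext
      omega
    exact p.injective this
  · exact Finset.nodup_toList _
  · rw [Finset.toList_toFinset]
    ext z
    simp only [List.mem_toFinset, permList, List.mem_ofFn, Finset.mem_Icc]
    constructor
    · rintro ⟨j, rfl⟩
      have := (p j).isLt
      omega
    · rintro ⟨h1, h2⟩
      refine ⟨p.symm ⟨z - 1, by omega⟩, ?_⟩
      simp only [Equiv.apply_symm_apply]
      omega

lemma perm_card_eq_cnt (n : ℕ) (hn : 1 ≤ n) (i : ℕ) :
    (Finset.univ.filter (fun p : Equiv.Perm (Fin n) =>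
        (minmaxTree (permList n p)).numChildren (entryAt n p i) = 1)).card
      = cnt (Finset.Icc 1 n) i := by
  have hcard : (Finset.Icc 1 n).card = n := by rw [Nat.card_Icc]; omega
  rw [cnt]
  apply Finset.card_bij (fun p _ => permList n p)
  · intro p hp
    rw [Finset.mem_filter] at hp ⊢
    exact ⟨permList_mem_permsF p, hp.2⟩
  · intro p _ q _ h
    rw [permList, permList, List.ofFn_inj] at h
    apply Equiv.ext
    intro x
    apply Fin.ext
    have := congrFun h x
    omega
  · intro l hl
    rw [Finset.mem_filter] at hl
    obtain ⟨hl1, hl2⟩ := hl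
    have hlen : l.length = n := by rw [length_of_mem_permsF hl1, hcard]
    have hnd : l.Nodup := nodup_of_mem_permsF hl1
    have hmem : ∀ x ∈ l, 1 ≤ x ∧ x ≤ n := by
      intro x hx
      have := (mem_of_mem_permsF hl1).mp hx
      rw [Finset.mem_Icc] at this
      exact this
    have hval : ∀ (j : Fin n), 1 ≤ l[(j : ℕ)]'(by omega) ∧ l[(j : ℕ)]'(by omega) ≤ n :=
      fun j => hmem _ (List.getElem_mem _)
    set f : Fin n → Fin n := fun j => ⟨l[(j : ℕ)]'(by omega) - 1, by
      have := hval j; omega⟩ with hf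
    have hinj : Function.Injective f := by
      intro a c hac
      rw [hf] at hac
      simp only [Fin.mk.injEq] at hac
      have h1 := hval a
      have h2 := hval c
      have : l[(a : ℕ)]'(by omega) = l[(c : ℕ)]'(by omega) := by omega
      have := (List.Nodup.getElem_inj_iff hnd).mp this
      exact Fin.ext this
    set p : Equiv.Perm (Fin n) := Equiv.ofBijective f
      ((Finite.injective_iff_bijective).mp hinj) with hp
    have hpl : permList n p = l := by
      apply List.ext_getElem
      · simp [permList, hlen]
      · intro j h1 h2
        have hjn : j < n := by omega
        have hof : (permList n p)[j]'h1 = (↑(p ⟨j, hjn⟩) : ℕ) + 1 :=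
          List.getElem_ofFn _
        have hfin : (↑(p ⟨j, hjn⟩) : ℕ) + 1 = l[j]'h2 := by
          show l[j]'h2 - 1 + 1 = l[j]'h2
          have := hmem _ (List.getElem_mem h2)
          omega
        exact hof.trans hfin
    refine ⟨p, ?_, hpl⟩
    rw [Finset.mem_filter]
    refine ⟨Finset.mem_univ _, ?_⟩
    show (minmaxTree (permList n p)).numChildren ((permList n p).getD (i-1) 0) = 1
    rw [hpl]
    exact hl2

end MMProof

/-- For `n ≥ 4` and `2 ≤ i ≤ n − 2`, the number of permutations `p`
of `{1,…,n}` in which the entry `p_i` has exactly one child in the minmax tree is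
exactly `n!/3`. -/
theorem one_child_count (n : ℕ) (hn : 4 ≤ n) (i : ℕ) (hi1 : 2 ≤ i) (hi2 : i ≤ n - 2) :
    (Finset.univ.filter (fun p : Equiv.Perm (Fin n) =>
        (minmaxTree (permList n p)).numChildren (entryAt n p i) = 1)).card =
      n.factorial / 3 := by
  have hcard : (Finset.Icc 1 n).card = n := by rw [Nat.card_Icc]; omega
  rw [MMProof.perm_card_eq_cnt n (by omega) i,
    MMProof.cnt_eq_t1 n _ hcard i (by omega) (by omega), MMProof.t1,
    if_neg (by omega), if_neg (by omega)]
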